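/- For each countable subset Σ of ℂ and each dense subset T of ℂ, there exists an entire function f : ℂ → ℂ which is not a polynomial such that f^(s)(α) ∈ T for every α ∈ Σ and every natural number s ≥ 0. -/

import Mathlib

namespace S10
open Polynomial Finset
open scoped Classical

noncomputable section
variable (a : ℕ → ℂ) (pick : ℂ → ℝ → ℂ)

def al (k : ℕ) : ℂ := a (Nat.unpair k).1
def si (k : ℕ) : ℕ := (Nat.unpair k).2
def ex (k j : ℕ) : ℕ := if al a j = al a k then 0 else si j + 1
def B (k : ℕ) : Polynomial ℂ := ∏ j ∈ Finset.range k, (X - C (al a j)) ^ ex a k j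
def R (k : ℕ) : Polynomial ℂ := (X - C (al a k)) ^ (si k) * B a k
def D (k : ℕ) : ℂ := ((si k).factorial : ℂ) * (B a k).eval (al a k)
def Ab (k : ℕ) : ℝ := ∑ j ∈ Finset.range (k+1), ‖al a j‖
def dg (k : ℕ) : ℕ := si k + ∑ j ∈ Finset.range k, ex a k j
def Mb (N k : ℕ) : ℝ := ((N:ℝ) + Ab a k + 1) ^ dg a k
def Feas (k : ℕ) : Prop := ∀ j < k, al a j = al a k → si j < si k
def del (k : ℕ) : ℝ := ‖D a k‖ * (2:ℝ)⁻¹ ^ k / (Mb a k k + 1)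

lemma evalA (β : ℂ) : ∀ (s m : ℕ) (q : Polynomial ℂ), s < m →
    (derivative^[s] ((X - C β) ^ m * q)).eval β = 0 := by
  intro s
  induction s with
  | zero =>
    intro m q hm
    simp [eval_mul, eval_pow, sub_self]
    left
    omega
  | succ s ih =>
    intro m q hm
    obtain ⟨m, rfl⟩ : ∃ m', m = m' + 1 := ⟨m - 1, by omega⟩
    rw [Function.iterate_succ_apply]
    have hd : derivative ((X - C β) ^ (m + 1) * q)
        = (X - C β) ^ m * (C ((m:ℂ) + 1) * q + (X - C β) * derivative q) := by
      rw [derivative_mul, derivative_pow, derivative_sub, derivative_X, derivative_C]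
      push_cast
      ring
    rw [hd]
    exact ih m _ (by omega)

lemma evalB (β : ℂ) : ∀ (m : ℕ) (q : Polynomial ℂ),
    (derivative^[m] ((X - C β) ^ m * q)).eval β = (m.factorial : ℂ) * q.eval β := by
  intro m
  induction m with
  | zero => intro q; simp
  | succ m ih =>
    intro q
    rw [Function.iterate_succ_apply]
    have hd : derivative ((X - C β) ^ (m + 1) * q)
        = (X - C β) ^ m * (C ((m:ℂ) + 1) * q + (X - C β) * derivative q) := by
      rw [derivative_mul, derivative_pow, derivative_sub, derivative_X, derivative_C]
      push_cast
      ring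
    rw [hd, ih]
    simp [eval_add, eval_mul, sub_self, Nat.factorial_succ]
    push_cast
    ring

lemma eval_iter_R_self (k : ℕ) :
    (derivative^[si k] (R a k)).eval (al a k) = D a k := evalB (al a k) (si k) (B a k)

lemma B_eval_ne (k : ℕ) : (B a k).eval (al a k) ≠ 0 := by
  rw [B, eval_prod]
  refine Finset.prod_ne_zero_iff.mpr fun j hj => ?_
  rw [eval_pow, eval_sub, eval_X, eval_C, ex]
  by_cases h : al a j = al a k
  · simp [h]
  · exact pow_ne_zero _ (sub_ne_zero_of_ne (Ne.symm h))

lemma D_ne (k : ℕ) : D a k ≠ 0 :=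
  mul_ne_zero (Nat.cast_ne_zero.mpr (Nat.factorial_ne_zero _)) (B_eval_ne a k)

lemma Ab_nonneg (k : ℕ) : 0 ≤ Ab a k :=
  Finset.sum_nonneg (fun j _ => norm_nonneg (al a j))

lemma Mb_nonneg (N k : ℕ) : 0 ≤ Mb a N k := by
  apply pow_nonneg
  have := Ab_nonneg a k
  have : (0:ℝ) ≤ (N:ℝ) := Nat.cast_nonneg N
  have := Ab_nonneg a k
  linarith

lemma del_pos (k : ℕ) : 0 < del a k := by
  have h1 : (0:ℝ) < ‖D a k‖ := norm_pos_iff.mpr (D_ne a k)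
  have h2 : (0:ℝ) < (2:ℝ)⁻¹ ^ k := pow_pos (by norm_num) k
  have h3 : (0:ℝ) ≤ Mb a k k := Mb_nonneg a k k
  exact div_pos (mul_pos h1 h2) (by linarith)

lemma eval_iter_R_earlier {j k : ℕ} (hjk : j < k) (hF : Feas a k) :
    (derivative^[si j] (R a k)).eval (al a j) = 0 := by
  by_cases h : al a j = al a k
  · rw [R, h]
    exact evalA _ _ _ _ (hF j hjk h)
  · have : R a k = (X - C (al a j)) ^ (si j + 1) *
        ((X - C (al a k)) ^ (si k) * ∏ i ∈ (Finset.range k).erase j, (X - C (al a i)) ^ ex a k i) := by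
      rw [R, B, ← Finset.mul_prod_erase _ _ (Finset.mem_range.mpr hjk)]
      rw [ex, if_neg h]
      ring
    rw [this]
    exact evalA _ _ _ _ (Nat.lt_succ_self _)

def c : ℕ → ℂ
  | k =>
    let prev : ℂ := ∑ j ∈ (Finset.range k).attach,
      c j.1 * ((derivative^[si k] (R a j.1)).eval (al a k))
    if Feas a k then (pick prev (del a k) - prev) / D a k else 0
  decreasing_by exact Finset.mem_range.mp j.2

def prev (k : ℕ) : ℂ :=
  ∑ j ∈ Finset.range k, c a pick j * ((derivative^[si k] (R a j)).eval (al a k))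

lemma c_eq (k : ℕ) : c a pick k =
    if Feas a k then (pick (prev a pick k) (del a k) - prev a pick k) / D a k else 0 := by
  rw [c, prev]
  rw [← Finset.sum_attach (Finset.range k) (fun j => c a pick j * ((derivative^[si k] (R a j)).eval (al a k)))]

def Q (k : ℕ) : Polynomial ℂ := C (c a pick k) * R a k

lemma eval_iter_Q_earlier {j k : ℕ} (hjk : j < k) :
    (derivative^[si j] (Q a pick k)).eval (al a j) = 0 := by
  rw [Q, iterate_derivative_C_mul, eval_mul, eval_C]
  by_cases hF : Feas a k
  · rw [eval_iter_R_earlier a hjk hF, mul_zero]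
  · rw [c_eq, if_neg hF, zero_mul]

lemma eval_iter_Q_self {k : ℕ} (hF : Feas a k) :
    (derivative^[si k] (Q a pick k)).eval (al a k) = pick (prev a pick k) (del a k) - prev a pick k := by
  rw [Q, iterate_derivative_C_mul, eval_mul, eval_C, eval_iter_R_self, c_eq, if_pos hF,
    div_mul_cancel₀ _ (D_ne a k)]

lemma c_bound (hpick : ∀ z δ, 0 < δ → dist (pick z δ) z < δ) (k : ℕ) :
    ‖c a pick k‖ * (Mb a k k + 1) ≤ (2:ℝ)⁻¹ ^ k := by
  have hM : (0:ℝ) ≤ Mb a k k := Mb_nonneg a k k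
  rw [c_eq]
  by_cases hF : Feas a k
  · rw [if_pos hF]
    have hd := hpick (prev a pick k) (del a k) (del_pos a k)
    rw [dist_eq_norm] at hd
    have hDn : (0:ℝ) < ‖D a k‖ := norm_pos_iff.mpr (D_ne a k)
    rw [norm_div]
    have : ‖pick (prev a pick k) (del a k) - prev a pick k‖ / ‖D a k‖ ≤ del a k / ‖D a k‖ :=
      by gcongr
    calc ‖pick (prev a pick k) (del a k) - prev a pick k‖ / ‖D a k‖ * (Mb a k k + 1)
        ≤ del a k / ‖D a k‖ * (Mb a k k + 1) := by
          apply mul_le_mul_of_nonneg_right this (by linarith)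
      _ = (2:ℝ)⁻¹ ^ k := by
          have hM1 : Mb a k k + 1 ≠ 0 := by linarith
          have hD' : ‖D a k‖ ≠ 0 := ne_of_gt hDn
          rw [del, div_div, div_mul_eq_mul_div, div_eq_iff (mul_ne_zero hM1 hD')]
          ring
  · rw [if_neg hF]
    simp only [norm_zero, zero_mul]
    positivity

lemma R_eval_bound {z : ℂ} {N k : ℕ} (hz : ‖z‖ ≤ N) :
    ‖(R a k).eval z‖ ≤ Mb a N k := by
  have hb : (0:ℝ) ≤ (N:ℝ) + Ab a k + 1 := by
    have := Ab_nonneg a k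
    have : (0:ℝ) ≤ (N:ℝ) := Nat.cast_nonneg N
    have := Ab_nonneg a k
    linarith
  have key : ∀ j ≤ k, ‖z - al a j‖ ≤ (N:ℝ) + Ab a k + 1 := by
    intro j hj
    have h1 : ‖al a j‖ ≤ Ab a k := by
      refine Finset.single_le_sum (f := fun i => ‖al a i‖) (fun i _ => norm_nonneg _) ?_
      exact Finset.mem_range.mpr (by omega)
    calc ‖z - al a j‖ ≤ ‖z‖ + ‖al a j‖ := norm_sub_le _ _
      _ ≤ (N:ℝ) + Ab a k + 1 := by linarith
  rw [R, eval_mul, eval_pow, eval_sub, eval_X, eval_C, norm_mul, norm_pow, B, eval_prod]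
  have h2 : ‖∏ j ∈ Finset.range k, ((X - C (al a j)) ^ ex a k j).eval z‖
      ≤ ∏ j ∈ Finset.range k, ((N:ℝ) + Ab a k + 1) ^ ex a k j := by
    rw [norm_prod]
    apply Finset.prod_le_prod (fun j _ => norm_nonneg _)
    intro j hj
    rw [eval_pow, eval_sub, eval_X, eval_C, norm_pow]
    exact pow_le_pow_left₀ (norm_nonneg _) (key j (Finset.mem_range.mp hj).le) _
  calc ‖z - al a k‖ ^ si k * ‖∏ j ∈ Finset.range k, ((X - C (al a j)) ^ ex a k j).eval z‖
      ≤ ((N:ℝ) + Ab a k + 1) ^ si k * ∏ j ∈ Finset.range k, ((N:ℝ) + Ab a k + 1) ^ ex a k j := by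
        apply mul_le_mul (pow_le_pow_left₀ (norm_nonneg _) (key k le_rfl) _) h2 (norm_nonneg _)
        positivity
    _ = Mb a N k := by
        rw [Finset.prod_pow_eq_pow_sum, ← pow_add, Mb, dg]

lemma Mb_mono {N k : ℕ} (h : N ≤ k) : Mb a N k ≤ Mb a k k := by
  apply pow_le_pow_left₀
  · have := Ab_nonneg a k
    have : (0:ℝ) ≤ (N:ℝ) := Nat.cast_nonneg N
    have := Ab_nonneg a k
    linarith
  · have : (N:ℝ) ≤ (k:ℝ) := Nat.cast_le.mpr h
    linarith

lemma summable_u (hpick : ∀ z δ, 0 < δ → dist (pick z δ) z < δ) (N : ℕ) :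
    Summable (fun k => ‖c a pick k‖ * Mb a N k) := by
  rw [← summable_nat_add_iff N]
  apply Summable.of_nonneg_of_le
  · intro k
    have := Mb_nonneg a N (k + N)
    positivity
  · intro k
    calc ‖c a pick (k+N)‖ * Mb a N (k+N)
        ≤ ‖c a pick (k+N)‖ * Mb a (k+N) (k+N) :=
          mul_le_mul_of_nonneg_left (Mb_mono a (by omega)) (norm_nonneg _)
      _ ≤ ‖c a pick (k+N)‖ * (Mb a (k+N) (k+N) + 1) := by
          nlinarith [norm_nonneg (c a pick (k+N)), Mb_nonneg a (k+N) (k+N)]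
      _ ≤ (2:ℝ)⁻¹ ^ (k+N) := c_bound a pick hpick (k+N)
  · exact (summable_nat_add_iff N).mpr
      (summable_geometric_of_lt_one (by norm_num) (by norm_num))

lemma iteratedDeriv_eval (p : Polynomial ℂ) (s : ℕ) :
    iteratedDeriv s (fun z => p.eval z) = fun z => (derivative^[s] p).eval z := by
  induction s with
  | zero => simp [iteratedDeriv_zero]
  | succ s ih =>
    rw [iteratedDeriv_succ, ih, Function.iterate_succ_apply']
    funext z
    exact Polynomial.deriv (p := derivative^[s] p)

def F (N : ℕ) : ℂ → ℂ := fun z => (∑ k ∈ Finset.range N, Q a pick k).eval z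

def f : ℂ → ℂ := fun z => ∑' k, (Q a pick k).eval z

lemma Q_eval_bound {z : ℂ} {N k : ℕ} (hz : ‖z‖ ≤ N) :
    ‖(Q a pick k).eval z‖ ≤ ‖c a pick k‖ * Mb a N k := by
  rw [Q, eval_mul, eval_C, norm_mul]
  exact mul_le_mul_of_nonneg_left (R_eval_bound a hz) (norm_nonneg _)

lemma tendstoUnif (hpick : ∀ z δ, 0 < δ → dist (pick z δ) z < δ) (N : ℕ) :
    TendstoUniformlyOn (F a pick) (f a pick) Filter.atTop (Metric.closedBall 0 N) := by
  have h := tendstoUniformlyOn_tsum_nat (f := fun k z => (Q a pick k).eval z)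
    (s := Metric.closedBall (0:ℂ) N) (summable_u a pick hpick N)
    (fun k x hx => Q_eval_bound a pick (mem_closedBall_zero_iff.mp hx))
  convert h using 1
  funext N' z
  simp only [F, eval_finset_sum]
  rfl

lemma tendstoLocUnif (hpick : ∀ z δ, 0 < δ → dist (pick z δ) z < δ) :
    TendstoLocallyUniformlyOn (F a pick) (f a pick) Filter.atTop Set.univ := by
  rw [tendstoLocallyUniformlyOn_iff_forall_isCompact isOpen_univ]
  intro K _ hK
  obtain ⟨r, hr⟩ := hK.isBounded.subset_closedBall 0
  obtain ⟨N, hN⟩ := exists_nat_ge r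
  exact (tendstoUnif a pick hpick N).mono
    (hr.trans (Metric.closedBall_subset_closedBall hN))

lemma tendsto_iteratedDeriv (hpick : ∀ z δ, 0 < δ → dist (pick z δ) z < δ) (s : ℕ) :
    TendstoLocallyUniformlyOn (fun N => iteratedDeriv s (F a pick N))
      (iteratedDeriv s (f a pick)) Filter.atTop Set.univ := by
  induction s with
  | zero => simpa [iteratedDeriv_zero] using tendstoLocUnif a pick hpick
  | succ s ih =>
    have hdiff : ∀ N : ℕ, DifferentiableOn ℂ (iteratedDeriv s (F a pick N)) Set.univ := by
      intro N
      unfold F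
      rw [iteratedDeriv_eval]
      exact (Polynomial.differentiable _).differentiableOn
    have := ih.deriv (Filter.Eventually.of_forall hdiff) isOpen_univ
    simp only [Function.comp_def, ← iteratedDeriv_succ] at this
    exact this

lemma f_differentiable (hpick : ∀ z δ, 0 < δ → dist (pick z δ) z < δ) :
    Differentiable ℂ (f a pick) := by
  rw [← differentiableOn_univ]
  refine (tendstoLocUnif a pick hpick).differentiableOn
    (Filter.Eventually.of_forall fun N => ?_) isOpen_univ
  exact (Polynomial.differentiable _).differentiableOn

lemma iteratedDeriv_F_eval (N s : ℕ) (α : ℂ) :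
    iteratedDeriv s (F a pick N) α = ∑ k ∈ Finset.range N, (derivative^[s] (Q a pick k)).eval α := by
  unfold F
  rw [iteratedDeriv_eval, iterate_derivative_sum]
  simp [eval_finset_sum]

lemma main_value (hpick : ∀ z δ, 0 < δ → dist (pick z δ) z < δ) {K : ℕ} (hF : Feas a K) :
    iteratedDeriv (si K) (f a pick) (al a K) = pick (prev a pick K) (del a K) := by
  have hlim := (tendsto_iteratedDeriv a pick hpick (si K)).tendsto_at (Set.mem_univ (al a K))
  have heval : ∀ N ∈ Set.Ici (K + 1),
      iteratedDeriv (si K) (F a pick N) (al a K) = pick (prev a pick K) (del a K) := by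
    intro N hN
    rw [iteratedDeriv_F_eval]
    have h1 : ∑ k ∈ Finset.range N, (derivative^[si K] (Q a pick k)).eval (al a K)
        = ∑ k ∈ Finset.range (K + 1), (derivative^[si K] (Q a pick k)).eval (al a K) := by
      symm
      apply Finset.sum_subset
      · exact Finset.range_subset_range.mpr hN
      · intro k _ hk
        rw [Finset.mem_range] at hk
        exact eval_iter_Q_earlier a pick (by omega)
    rw [h1, Finset.sum_range_succ, eval_iter_Q_self a pick hF]
    have h2 : ∑ k ∈ Finset.range K, (derivative^[si K] (Q a pick k)).eval (al a K)
        = prev a pick K := by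
      rw [prev]
      apply Finset.sum_congr rfl
      intro j _
      rw [Q, iterate_derivative_C_mul, eval_mul, eval_C]
    rw [h2]
    ring
  have hconst : Filter.Tendsto (fun N => iteratedDeriv (si K) (F a pick N) (al a K))
      Filter.atTop (nhds (pick (prev a pick K) (del a K))) := by
    apply Filter.Tendsto.congr' _ tendsto_const_nhds
    filter_upwards [Filter.Ici_mem_atTop (K + 1)] with N hN
    exact (heval N hN).symm
  exact tendsto_nhds_unique hlim hconst

lemma pair_le_pair_right (u : ℕ) {b c : ℕ} (h : b ≤ c) : Nat.pair u b ≤ Nat.pair u c := by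
  rcases Nat.lt_or_ge b c with h' | h'
  · exact (Nat.pair_lt_pair_right u h').le
  · have : b = c := le_antisymm h h'
    rw [this]

lemma find_feasible {α : ℂ} {s : ℕ}
    (hP : ∃ k, al a k = α ∧ si k = s) :
    Feas a (Nat.find hP) ∧ al a (Nat.find hP) = α ∧ si (Nat.find hP) = s := by
  obtain ⟨h1, h2⟩ := Nat.find_spec hP
  refine ⟨?_, h1, h2⟩
  intro j hj he
  by_contra hc
  push_neg at hc
  set j' := Nat.pair (Nat.unpair j).1 (si (Nat.find hP)) with hj'
  have hj'le : j' ≤ j := by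
    calc j' ≤ Nat.pair (Nat.unpair j).1 (Nat.unpair j).2 := pair_le_pair_right _ hc
      _ = j := Nat.pair_unpair j
  have hPj' : al a j' = α ∧ si j' = s := by
    constructor
    · have hh : a (Nat.unpair j).1 = α := he.trans h1
      rw [al, hj', Nat.unpair_pair]
      simpa using hh
    · rw [si, hj', Nat.unpair_pair, h2]
  exact Nat.find_min hP (lt_of_le_of_lt hj'le hj) hPj'

end
end S10

theorem stmt_10 (S : Set ℂ) (hS : S.Countable) (T : Set ℂ) (hT : Dense T) :
    ∃ f : ℂ → ℂ, Differentiable ℂ f ∧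
      (∀ p : Polynomial ℂ, f ≠ fun z => p.eval z) ∧
      ∀ α ∈ S, ∀ s : ℕ, iteratedDeriv s f α ∈ T := by
  classical
  obtain ⟨a, ha⟩ := (hS.insert 0).exists_eq_range (Set.insert_nonempty 0 S)
  have haS : S ⊆ Set.range a := by rw [← ha]; exact Set.subset_insert _ _
  have hpickex : ∀ z : ℂ, ∀ δ : ℝ, ∃ v : ℂ, 0 < δ → v ∈ T ∧ v ≠ 0 ∧ dist v z < δ := by
    intro z δ
    by_cases hδ : 0 < δ
    · have hU : IsOpen (Metric.ball z δ \ {0}) := Metric.isOpen_ball.sdiff isClosed_singleton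
      have hne : (Metric.ball z δ \ {0}).Nonempty := by
        rcases eq_or_ne z 0 with rfl | hz
        · refine ⟨((δ/2 : ℝ) : ℂ), ?_, ?_⟩
          · rw [Metric.mem_ball, dist_zero_right]
            rw [Complex.norm_real]
            rw [Real.norm_eq_abs, abs_of_pos (by linarith)]
            linarith
          · simp only [Set.mem_singleton_iff]
            exact Complex.ofReal_ne_zero.mpr (by linarith)
        · exact ⟨z, Metric.mem_ball_self hδ, hz⟩
      obtain ⟨v, hvT, hv⟩ := hT.exists_mem_open hU hne
      exact ⟨v, fun _ => ⟨hvT, hv.2, Metric.mem_ball.mp hv.1⟩⟩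
    · exact ⟨0, fun h => absurd h hδ⟩
  choose pick hpick using hpickex
  have hd : ∀ z δ, 0 < δ → dist (pick z δ) z < δ := fun z δ h => (hpick z δ h).2.2
  refine ⟨S10.f a pick, S10.f_differentiable a pick hd, ?_, ?_⟩
  · intro p hp
    set s := p.natDegree + 1 with hs
    have hP : ∃ k, S10.al a k = a 0 ∧ S10.si k = s :=
      ⟨Nat.pair 0 s, by simp [S10.al, S10.si, Nat.unpair_pair]⟩
    obtain ⟨hF, h1, h2⟩ := S10.find_feasible a hP
    have hmv := S10.main_value a pick hd hF
    rw [h1, h2] at hmv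
    have hz : iteratedDeriv s (S10.f a pick) (a 0) ≠ 0 := by
      rw [hmv]
      exact (hpick _ _ (S10.del_pos a _)).2.1
    rw [hp, S10.iteratedDeriv_eval,
      Polynomial.iterate_derivative_eq_zero (by omega : p.natDegree < s)] at hz
    simp at hz
  · intro α hα s
    obtain ⟨u, hu⟩ := haS hα
    have hP : ∃ k, S10.al a k = α ∧ S10.si k = s :=
      ⟨Nat.pair u s, by simp [S10.al, S10.si, Nat.unpair_pair, hu]⟩
    obtain ⟨hF, h1, h2⟩ := S10.find_feasible a hP
    have hmv := S10.main_value a pick hd hF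
    rw [h1, h2] at hmv
    rw [hmv]
    exact (hpick _ _ (S10.del_pos a _)).1
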